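/- For all integers a ≥ b ≥ 1, the free-separation number of the triangle C_3 is: fsep(C_3, a, b) = ⌊2(a−b)/3⌋ if 4a < 7b; fsep(C_3, a, b) = 2a − 3b if 7b ≤ 4a and a < 3b; and fsep(C_3, a, b) = a if 3b ≤ a. -/

import Mathlib

open SimpleGraph Finset

/-- An `(L,b)`-coloring of `G`: each vertex `v` receives a set `φ v ⊆ L v` with
`|φ v| = b`, and adjacent vertices receive disjoint sets. -/
def IsLbColoring {V : Type*} (G : SimpleGraph V) (L : V → Finset ℕ) (b : ℕ)
    (φ : V → Finset ℕ) : Prop :=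
  (∀ v, φ v ⊆ L v ∧ (φ v).card = b) ∧ ∀ u v, G.Adj u v → φ u ∩ φ v = ∅

/-- `G` is `(a,b,c)`-choosable: every `c`-separating `a`-list assignment admits an
`(L,b)`-coloring. -/
def Choosable {V : Type*} (G : SimpleGraph V) (a b c : ℕ) : Prop :=
  ∀ L : V → Finset ℕ, (∀ v, (L v).card = a) →
    (∀ u v, G.Adj u v → (L u ∩ L v).card ≤ c) →
    ∃ φ, IsLbColoring G L b φ

/-- `G` is `(a,b,c)`-free-choosable: for every `c`-separating `a`-list assignment,
any precoloring of one vertex by a `b`-subset of its list extends to an `(L,b)`-coloring. -/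
def FreeChoosable {V : Type*} (G : SimpleGraph V) (a b c : ℕ) : Prop :=
  ∀ L : V → Finset ℕ, (∀ v, (L v).card = a) →
    (∀ u v, G.Adj u v → (L u ∩ L v).card ≤ c) →
    ∀ (v₀ : V) (C : Finset ℕ), C ⊆ L v₀ → C.card = b →
      ∃ φ, IsLbColoring G L b φ ∧ φ v₀ = C

/-- The separation number `sep(G,a,b)`: the largest `c ≤ a` such that `G` is
`(a,b,c)`-choosable. -/
noncomputable def sep {V : Type*} (G : SimpleGraph V) (a b : ℕ) : ℕ :=
  sSup {c | c ≤ a ∧ Choosable G a b c}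

/-- The free-separation number `fsep(G,a,b)`: the largest `c ≤ a` such that `G` is
`(a,b,c)`-free-choosable. -/
noncomputable def fsep {V : Type*} (G : SimpleGraph V) (a b : ℕ) : ℕ :=
  sSup {c | c ≤ a ∧ FreeChoosable G a b c}

/-- From two sets `A`, `B` with `b ≤ |A|`, `b ≤ |B|`, `2b ≤ |A ∪ B|` one can extract
disjoint `b`-element subsets `S ⊆ A` and `T ⊆ B`. -/
lemma pairLemma (A B : Finset ℕ) (b : ℕ) (hA : b ≤ A.card) (hB : b ≤ B.card)
    (hAB : 2*b ≤ (A ∪ B).card) :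
    ∃ S T : Finset ℕ, S ⊆ A ∧ T ⊆ B ∧ Disjoint S T ∧ S.card = b ∧ T.card = b := by
  by_cases h : b ≤ (A \ B).card
  · obtain ⟨S, hS, hSc⟩ := Finset.exists_subset_card_eq h
    obtain ⟨T, hT, hTc⟩ := Finset.exists_subset_card_eq hB
    exact ⟨S, T, hS.trans sdiff_subset, hT,
      ((Finset.sdiff_disjoint.mono_left hS).mono_right hT), hSc, hTc⟩
  · push_neg at h
    have h1 : (A \ B).card + (A ∩ B).card = A.card := Finset.card_sdiff_add_card_inter A B
    have h2 : b - (A \ B).card ≤ (A ∩ B).card := by omega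
    obtain ⟨E, hE, hEc⟩ := Finset.exists_subset_card_eq h2
    set S := (A \ B) ∪ E with hSdef
    have hSA : S ⊆ A := union_subset sdiff_subset (hE.trans inter_subset_left)
    have hdisj : Disjoint (A \ B) E :=
      Finset.sdiff_disjoint.mono_right (hE.trans inter_subset_right)
    have hSc : S.card = b := by rw [Finset.card_union_of_disjoint hdisj, hEc]; omega
    have hBS : b ≤ (B \ S).card := by
      have : (B \ S).card + (B ∩ S).card = B.card := Finset.card_sdiff_add_card_inter B S
      have hBSsub : B ∩ S ⊆ E := by
        intro x hx
        simp only [mem_inter, hSdef, mem_union, mem_sdiff] at hx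
        rcases hx with ⟨hxB, hx2 | hx2⟩
        · exact absurd hxB hx2.2
        · exact hx2
      have := Finset.card_le_card hBSsub
      have hcu : (A ∪ B).card + (A ∩ B).card = A.card + B.card :=
        Finset.card_union_add_card_inter A B
      omega
    obtain ⟨T, hT, hTc⟩ := Finset.exists_subset_card_eq hBS
    exact ⟨S, T, hSA, hT.trans sdiff_subset, Finset.disjoint_sdiff.mono_right hT, hSc, hTc⟩

lemma triangle_adj {u v : Fin 3} (h : u ≠ v) : (cycleGraph 3).Adj u v := by
  rw [cycleGraph_three_eq_top]; exact h

/-- Sufficiency: the triangle is `(a,b,c)`-free-choosable under the arithmetic conditions. -/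
lemma fc_of (a b c : ℕ)
    (h1 : b + min b c ≤ a) (h2 : 2*b + c + min b (2*c) ≤ 2*a) :
    FreeChoosable (cycleGraph 3) a b c := by
  intro L hcard hsep v₀ C hCsub hCcard
  set u := v₀ + 1 with hu
  set w := v₀ + 2 with hw
  have hkey : ∀ v : Fin 3, v ≠ v + 1 ∧ v ≠ v + 2 ∧ v + 1 ≠ v + 2 ∧
      ∀ x : Fin 3, x = v ∨ x = v + 1 ∨ x = v + 2 := by decide
  obtain ⟨h01, h02, h12, hcov⟩ := hkey v₀
  have hx : (L u ∩ C).card ≤ min b c := by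
    refine le_min ?_ ?_
    · calc (L u ∩ C).card ≤ C.card := card_le_card inter_subset_right
      _ = b := hCcard
    · calc (L u ∩ C).card ≤ (L u ∩ L v₀).card :=
          card_le_card (inter_subset_inter le_rfl hCsub)
      _ ≤ c := hsep u v₀ (triangle_adj (Ne.symm h01))
  have hy : (L w ∩ C).card ≤ min b c := by
    refine le_min ?_ ?_
    · calc (L w ∩ C).card ≤ C.card := card_le_card inter_subset_right
      _ = b := hCcard
    · calc (L w ∩ C).card ≤ (L w ∩ L v₀).card :=
          card_le_card (inter_subset_inter le_rfl hCsub)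
      _ ≤ c := hsep w v₀ (triangle_adj (Ne.symm h02))
  have hz : (L u ∩ L w).card ≤ c := hsep u w (triangle_adj h12)
  have hAc : (L u \ C).card + (L u ∩ C).card = a := by
    rw [Finset.card_sdiff_add_card_inter, hcard]
  have hBc : (L w \ C).card + (L w ∩ C).card = a := by
    rw [Finset.card_sdiff_add_card_inter, hcard]
  have hUeq : (L u \ C) ∪ (L w \ C) = (L u ∪ L w) \ C := by
    ext x; simp [mem_union, mem_sdiff]; tauto
  have hUc : ((L u ∪ L w) \ C).card + ((L u ∪ L w) ∩ C).card = (L u ∪ L w).card :=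
    Finset.card_sdiff_add_card_inter _ _
  have hUU : (L u ∪ L w).card + (L u ∩ L w).card = a + a := by
    rw [Finset.card_union_add_card_inter, hcard, hcard]
  have hm1 : ((L u ∪ L w) ∩ C).card ≤ b := by
    calc ((L u ∪ L w) ∩ C).card ≤ C.card := card_le_card inter_subset_right
    _ = b := hCcard
  have hm2 : ((L u ∪ L w) ∩ C).card ≤ (L u ∩ C).card + (L w ∩ C).card := by
    calc ((L u ∪ L w) ∩ C).card ≤ ((L u ∩ C) ∪ (L w ∩ C)).card := by
          apply card_le_card; rw [union_inter_distrib_right]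
    _ ≤ _ := card_union_le _ _
  have hA : b ≤ (L u \ C).card := by omega
  have hB : b ≤ (L w \ C).card := by omega
  have hABu : 2*b ≤ ((L u \ C) ∪ (L w \ C)).card := by rw [hUeq]; omega
  obtain ⟨S, T, hS, hT, hST, hSc, hTc⟩ := pairLemma _ _ b hA hB hABu
  refine ⟨fun x => if x = v₀ then C else if x = u then S else T, ⟨?_, ?_⟩, by simp⟩
  · intro v
    rcases hcov v with hv | hv | hv <;> subst hv
    · simpa using ⟨hCsub, hCcard⟩
    · beta_reduce
      rw [if_neg (Ne.symm h01), if_pos rfl]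
      exact ⟨hS.trans sdiff_subset, hSc⟩
    · beta_reduce
      rw [if_neg (Ne.symm h02), if_neg (Ne.symm h12)]
      exact ⟨hT.trans sdiff_subset, hTc⟩
  · have eS : S ∩ C = ∅ := by
      rw [← Finset.disjoint_iff_inter_eq_empty]
      exact Finset.sdiff_disjoint.mono_left hS
    have eT : T ∩ C = ∅ := by
      rw [← Finset.disjoint_iff_inter_eq_empty]
      exact Finset.sdiff_disjoint.mono_left hT
    have eST : S ∩ T = ∅ := Finset.disjoint_iff_inter_eq_empty.1 hST
    intro p q hpq
    have hne : p ≠ q := hpq.ne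
    rcases hcov p with hp | hp | hp <;> rcases hcov q with hq | hq | hq <;>
      subst hp <;> subst hq <;>
      simp_all [Ne.symm h01, Ne.symm h02, Ne.symm h12, if_neg, Finset.inter_comm C S,
        Finset.inter_comm C T, Finset.inter_comm T S]

lemma ico_disj {a b c d : ℕ} (h : b ≤ c) : Disjoint (Finset.Ico a b) (Finset.Ico c d) := by
  rw [Finset.disjoint_left]
  intro x hx hx'
  simp only [Finset.mem_Ico] at hx hx'
  omega

/-- Necessity: a parametric family of bad instances for the triangle. -/
lemma nfc_of (a b c k t s : ℕ) (hba : b ≤ a) (htk : t ≤ k) (hkb : 2*k ≤ b + t)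
    (hst : s + t ≤ c) (hks : k + s ≤ a) (hkc : k ≤ c)
    (hviol : 2*a < 2*b + 2*k + s) :
    ¬ FreeChoosable (cycleGraph 3) a b c := by
  intro hFC
  have hkble : k ≤ b := by omega
  set L : Fin 3 → Finset ℕ :=
    ![Finset.Ico 0 b ∪ Finset.Ico (b+s) (s+a),
      Finset.Ico 0 k ∪ Finset.Ico b (b+s) ∪ Finset.Ico (s+a) (s+a+(a-k-s)),
      Finset.Ico (k-t) (2*k-t) ∪ Finset.Ico b (b+s) ∪ Finset.Ico (2*a+s) (2*a+s+(a-k-s))]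
    with hL
  have memL0 : ∀ x, x ∈ L 0 ↔ (x < b ∨ (b+s ≤ x ∧ x < s+a)) := by
    intro x; rw [hL]
    simp only [Matrix.cons_val_zero, Finset.mem_union, Finset.mem_Ico]
    omega
  have memL1 : ∀ x, x ∈ L 1 ↔ (x < k ∨ (b ≤ x ∧ x < b+s) ∨ (s+a ≤ x ∧ x < s+a+(a-k-s))) := by
    intro x; rw [hL]
    simp only [Matrix.cons_val_one, Matrix.head_cons, Matrix.cons_val_zero, Finset.mem_union, Finset.mem_Ico]
    omega
  have memL2 : ∀ x, x ∈ L 2 ↔ ((k-t ≤ x ∧ x < 2*k-t) ∨ (b ≤ x ∧ x < b+s)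
      ∨ (2*a+s ≤ x ∧ x < 2*a+s+(a-k-s))) := by
    intro x; rw [hL]
    show x ∈ Finset.Ico (k-t) (2*k-t) ∪ Finset.Ico b (b+s)
        ∪ Finset.Ico (2*a+s) (2*a+s+(a-k-s)) ↔ _
    simp only [Finset.mem_union, Finset.mem_Ico]
    omega
  have hcard : ∀ v, (L v).card = a := by
    intro v
    fin_cases v
    · show (Finset.Ico 0 b ∪ Finset.Ico (b+s) (s+a)).card = a
      rw [Finset.card_union_of_disjoint (ico_disj (by omega)), Nat.card_Ico, Nat.card_Ico]
      omega
    · show (Finset.Ico 0 k ∪ Finset.Ico b (b+s) ∪ Finset.Ico (s+a) (s+a+(a-k-s))).card = a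
      rw [Finset.card_union_of_disjoint
          (Finset.disjoint_union_left.2 ⟨ico_disj (by omega), ico_disj (by omega)⟩),
        Finset.card_union_of_disjoint (ico_disj (by omega)), Nat.card_Ico, Nat.card_Ico,
        Nat.card_Ico]
      omega
    · show (Finset.Ico (k-t) (2*k-t) ∪ Finset.Ico b (b+s)
          ∪ Finset.Ico (2*a+s) (2*a+s+(a-k-s))).card = a
      rw [Finset.card_union_of_disjoint
          (Finset.disjoint_union_left.2 ⟨ico_disj (by omega), ico_disj (by omega)⟩),
        Finset.card_union_of_disjoint (ico_disj (by omega)), Nat.card_Ico, Nat.card_Ico,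
        Nat.card_Ico]
      omega
  have hi01 : (L 0 ∩ L 1).card ≤ c := by
    have hsub : L 0 ∩ L 1 ⊆ Finset.Ico 0 k := by
      intro x hx
      rw [Finset.mem_inter, memL0, memL1] at hx
      rw [Finset.mem_Ico]
      omega
    calc (L 0 ∩ L 1).card ≤ (Finset.Ico 0 k).card := Finset.card_le_card hsub
    _ ≤ c := by rw [Nat.card_Ico]; omega
  have hi02 : (L 0 ∩ L 2).card ≤ c := by
    have hsub : L 0 ∩ L 2 ⊆ Finset.Ico (k-t) (2*k-t) := by
      intro x hx
      rw [Finset.mem_inter, memL0, memL2] at hx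
      rw [Finset.mem_Ico]
      omega
    calc (L 0 ∩ L 2).card ≤ (Finset.Ico (k-t) (2*k-t)).card := Finset.card_le_card hsub
    _ ≤ c := by rw [Nat.card_Ico]; omega
  have hi12 : (L 1 ∩ L 2).card ≤ c := by
    have hsub : L 1 ∩ L 2 ⊆ Finset.Ico (k-t) k ∪ Finset.Ico b (b+s) := by
      intro x hx
      rw [Finset.mem_inter, memL1, memL2] at hx
      rw [Finset.mem_union, Finset.mem_Ico, Finset.mem_Ico]
      omega
    calc (L 1 ∩ L 2).card ≤ (Finset.Ico (k-t) k ∪ Finset.Ico b (b+s)).card :=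
          Finset.card_le_card hsub
    _ ≤ (Finset.Ico (k-t) k).card + (Finset.Ico b (b+s)).card := Finset.card_union_le _ _
    _ ≤ c := by rw [Nat.card_Ico, Nat.card_Ico]; omega
  have hsep : ∀ u v : Fin 3, (cycleGraph 3).Adj u v → (L u ∩ L v).card ≤ c := by
    intro u v huv
    fin_cases u <;> fin_cases v <;>
      first
        | exact absurd huv (by decide)
        | exact hi01 | exact hi02 | exact hi12
        | (rw [Finset.inter_comm]; first | exact hi01 | exact hi02 | exact hi12)
  have hCsub : Finset.Ico 0 b ⊆ L 0 := by
    intro x hx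
    rw [Finset.mem_Ico] at hx
    rw [memL0]
    omega
  obtain ⟨φ, ⟨hφsub, hφadj⟩, hφ0⟩ :=
    hFC L hcard hsep 0 (Finset.Ico 0 b) hCsub (by rw [Nat.card_Ico]; omega)
  have hnot1 : ∀ x ∈ φ 1, x ∉ Finset.Ico 0 b := by
    intro x hx hx'
    have h := hφadj 1 0 (by decide)
    have : x ∈ φ 1 ∩ φ 0 := by rw [Finset.mem_inter, hφ0]; exact ⟨hx, hx'⟩
    rw [h] at this
    exact absurd this (Finset.notMem_empty x)
  have hnot2 : ∀ x ∈ φ 2, x ∉ Finset.Ico 0 b := by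
    intro x hx hx'
    have h := hφadj 2 0 (by decide)
    have : x ∈ φ 2 ∩ φ 0 := by rw [Finset.mem_inter, hφ0]; exact ⟨hx, hx'⟩
    rw [h] at this
    exact absurd this (Finset.notMem_empty x)
  set T : Finset ℕ := Finset.Ico b (b+s) ∪ Finset.Ico (s+a) (s+a+(a-k-s))
      ∪ Finset.Ico (2*a+s) (2*a+s+(a-k-s)) with hT
  have hsub12 : φ 1 ∪ φ 2 ⊆ T := by
    intro x hx
    rw [Finset.mem_union] at hx
    rw [hT]
    simp only [Finset.mem_union, Finset.mem_Ico]
    rcases hx with hx | hx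
    · have h1 := (hφsub 1).1 hx
      rw [memL1] at h1
      have h2 := hnot1 x hx
      rw [Finset.mem_Ico] at h2
      omega
    · have h1 := (hφsub 2).1 hx
      rw [memL2] at h1
      have h2 := hnot2 x hx
      rw [Finset.mem_Ico] at h2
      omega
  have hTcard : T.card ≤ s + (a-k-s) + (a-k-s) := by
    rw [hT]
    calc (Finset.Ico b (b+s) ∪ Finset.Ico (s+a) (s+a+(a-k-s))
        ∪ Finset.Ico (2*a+s) (2*a+s+(a-k-s))).card
        ≤ (Finset.Ico b (b+s) ∪ Finset.Ico (s+a) (s+a+(a-k-s))).card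
          + (Finset.Ico (2*a+s) (2*a+s+(a-k-s))).card := Finset.card_union_le _ _
      _ ≤ (Finset.Ico b (b+s)).card + (Finset.Ico (s+a) (s+a+(a-k-s))).card
          + (Finset.Ico (2*a+s) (2*a+s+(a-k-s))).card := by
            have := Finset.card_union_le (Finset.Ico b (b+s)) (Finset.Ico (s+a) (s+a+(a-k-s)))
            omega
      _ = s + (a-k-s) + (a-k-s) := by rw [Nat.card_Ico, Nat.card_Ico, Nat.card_Ico]; omega
  have hdisj12 : Disjoint (φ 1) (φ 2) :=
    Finset.disjoint_iff_inter_eq_empty.2 (hφadj 1 2 (by decide))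
  have hcard12 : (φ 1 ∪ φ 2).card = 2*b := by
    rw [Finset.card_union_of_disjoint hdisj12, (hφsub 1).2, (hφsub 2).2]
    omega
  have := Finset.card_le_card hsub12
  omega

lemma fc_mono {V : Type*} {G : SimpleGraph V} {a b c c' : ℕ}
    (h : FreeChoosable G a b c) (hle : c' ≤ c) : FreeChoosable G a b c' :=
  fun L hc hs => h L hc (fun u v huv => (hs u v huv).trans hle)

lemma fsep_eq {V : Type*} {G : SimpleGraph V} {a b m : ℕ} (h1 : m ≤ a)
    (h2 : FreeChoosable G a b m) (h3 : ∀ c, c ≤ a → FreeChoosable G a b c → c ≤ m) :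
    fsep G a b = m := by
  apply le_antisymm
  · exact csSup_le ⟨m, h1, h2⟩ (fun x hx => h3 x hx.1 hx.2)
  · exact le_csSup ⟨a, fun x hx => hx.1⟩ ⟨h1, h2⟩

theorem fsep_triangle (a b : ℕ) (hb : 1 ≤ b) (hba : b ≤ a) :
    (4 * a < 7 * b → fsep (cycleGraph 3) a b = 2 * (a - b) / 3) ∧
    (7 * b ≤ 4 * a → a < 3 * b → fsep (cycleGraph 3) a b = 2 * a - 3 * b) ∧
    (3 * b ≤ a → fsep (cycleGraph 3) a b = a) := by
  refine ⟨fun h47 => ?_, fun h74 h3 => ?_, fun h3 => ?_⟩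
  · refine fsep_eq (by omega) (fc_of a b _ (by omega) (by omega)) ?_
    intro c hca hfc
    by_contra hgt
    push_neg at hgt
    have hfc' : FreeChoosable (cycleGraph 3) a b (2*(a-b)/3 + 1) := fc_mono hfc (by omega)
    by_cases h2c : 2*(2*(a-b)/3 + 1) ≤ b
    · exact nfc_of a b (2*(a-b)/3 + 1) (2*(a-b)/3 + 1) 0 (2*(a-b)/3 + 1) hba (by omega)
        (by omega) (by omega) (by omega) (by omega) (by omega) hfc'
    · exact nfc_of a b (2*(a-b)/3 + 1) (min b (2*(a-b)/3 + 1))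
        (2*(min b (2*(a-b)/3 + 1)) - b) ((2*(a-b)/3 + 1) - (2*(min b (2*(a-b)/3 + 1)) - b))
        hba (by omega) (by omega) (by omega) (by omega) (by omega) (by omega) hfc'
  · refine fsep_eq (by omega) (fc_of a b _ (by omega) (by omega)) ?_
    intro c hca hfc
    by_contra hgt
    push_neg at hgt
    have hfc' : FreeChoosable (cycleGraph 3) a b (2*a - 3*b + 1) := fc_mono hfc (by omega)
    exact nfc_of a b (2*a - 3*b + 1) (min b (2*a - 3*b + 1))
      (2*(min b (2*a - 3*b + 1)) - b) ((2*a - 3*b + 1) - (2*(min b (2*a - 3*b + 1)) - b))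
      hba (by omega) (by omega) (by omega) (by omega) (by omega) (by omega) hfc'
  · exact fsep_eq le_rfl (fc_of a b a (by omega) (by omega)) (fun c hca _ => hca)
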